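/- Let k ∈ ℝ and let f : ℝⁿ → ℝ be C² on ℝⁿ \ {0} and positively homogeneous of degree k. Let v ≠ 0 with k · f(v) ≠ 0. Then for every X ∈ ℝⁿ, writing X₀ = X − (Df(v)(X)/(k · f(v))) · v, one has D²f(v)(X, X) = D²f(v)(X₀, X₀) + ((k − 1)/(k · f(v))) · (Df(v)(X))². -/

import Mathlib

/-- Splitting of the second differential of a homogeneous function along `ker Θ₁` and the
radial direction:  `D²f(v)(X, X) = D²f(v)(X₀, X₀) + ((k−1)/(k·f(v)))·(Df(v)(X))²`, where
`X₀ = X − (Df(v)(X)/(k·f(v)))·v`. -/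
theorem hessian_splitting (n : ℕ) (k : ℝ) (f : (Fin n → ℝ) → ℝ)
    (hf : ContDiffOn ℝ 2 f {x | x ≠ 0})
    (hhom : ∀ t : ℝ, 0 < t → ∀ x : Fin n → ℝ, x ≠ 0 → f (t • x) = t ^ k * f x)
    (v : Fin n → ℝ) (hv : v ≠ 0) (hkf : k * f v ≠ 0) (X : Fin n → ℝ) :
    iteratedFDeriv ℝ 2 f v ![X, X] =
      iteratedFDeriv ℝ 2 f v
        ![X - (fderiv ℝ f v X / (k * f v)) • v, X - (fderiv ℝ f v X / (k * f v)) • v] +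
      ((k - 1) / (k * f v)) * (fderiv ℝ f v X) ^ 2 := by
  have hs : IsOpen {x : Fin n → ℝ | x ≠ 0} := isOpen_compl_singleton
  have hdiff : ∀ x : Fin n → ℝ, x ≠ 0 → DifferentiableAt ℝ f x := fun x hx =>
    (hf.contDiffAt (hs.mem_nhds hx)).differentiableAt two_ne_zero
  -- Euler's identity
  have euler : ∀ x : Fin n → ℝ, x ≠ 0 → fderiv ℝ f x x = k * f x := by
    intro x hx
    have hφ : HasDerivAt (fun t : ℝ => t • x) x 1 := by
      simpa using (hasDerivAt_id (1 : ℝ)).smul_const x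
    have h1 : HasDerivAt (fun t : ℝ => f (t • x)) (fderiv ℝ f x x) 1 :=
      HasFDerivAt.comp_hasDerivAt 1
        (by simpa using (hdiff x hx).hasFDerivAt :
          HasFDerivAt f (fderiv ℝ f x) ((1 : ℝ) • x)) hφ
    have heq : (fun t : ℝ => f (t • x)) =ᶠ[nhds 1] fun t => t ^ k * f x := by
      filter_upwards [eventually_gt_nhds zero_lt_one] with t ht
      exact hhom t ht x hx
    have h2 : HasDerivAt (fun t : ℝ => t ^ k * f x) (k * f x) 1 := by
      simpa [Real.one_rpow] using
        (Real.hasDerivAt_rpow_const (p := k) (Or.inl one_ne_zero)).mul_const (f x)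
    exact (h1.congr_of_eventuallyEq heq.symm).unique h2
  -- homogeneity of the derivative along the ray at v
  have hom' : ∀ t : ℝ, 0 < t → ∀ Y, fderiv ℝ f (t • v) Y = t ^ (k - 1) * fderiv ℝ f v Y := by
    intro t ht Y
    have ht0 : t ≠ 0 := ne_of_gt ht
    have htv : t • v ≠ 0 := smul_ne_zero ht0 hv
    have hL : HasFDerivAt (fun y : Fin n → ℝ => t • y)
        (t • ContinuousLinearMap.id ℝ (Fin n → ℝ)) v := by
      simpa using (t • ContinuousLinearMap.id ℝ (Fin n → ℝ)).hasFDerivAt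
    have hg : HasFDerivAt (fun y => f (t • y))
        ((fderiv ℝ f (t • v)).comp (t • ContinuousLinearMap.id ℝ (Fin n → ℝ))) v :=
      ((hdiff _ htv).hasFDerivAt).comp v hL
    have heq : (fun y => f (t • y)) =ᶠ[nhds v] fun y => t ^ k * f y := by
      filter_upwards [hs.mem_nhds hv] with y hy
      exact hhom t ht y hy
    have h2 : HasFDerivAt (fun y => t ^ k * f y) (t ^ k • fderiv ℝ f v) v :=
      ((hdiff v hv).hasFDerivAt).const_mul (t ^ k)
    have hEq := (hg.congr_of_eventuallyEq heq.symm).unique h2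
    have := congrArg (fun L : (Fin n → ℝ) →L[ℝ] ℝ => L Y) hEq
    simp only [ContinuousLinearMap.comp_apply, ContinuousLinearMap.smul_apply,
      ContinuousLinearMap.coe_id', id_eq, map_smul, smul_eq_mul] at this
    have hk : t ^ (k - 1) = t ^ k / t := by
      rw [Real.rpow_sub ht, Real.rpow_one]
    rw [hk]
    field_simp
    linarith [this]
  -- differentiability of the derivative
  have hD : DifferentiableAt ℝ (fderiv ℝ f) v := by
    have h2 : ContDiffAt ℝ 2 f v := hf.contDiffAt (hs.mem_nhds hv)
    exact (h2.fderiv_right (m := 1) (by norm_num)).differentiableAt one_ne_zero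
  -- second derivative along radial direction
  have hBv : ∀ Y, fderiv ℝ (fderiv ℝ f) v v Y = (k - 1) * fderiv ℝ f v Y := by
    have hφ : HasDerivAt (fun t : ℝ => t • v) v 1 := by
      simpa using (hasDerivAt_id (1 : ℝ)).smul_const v
    have h1 : HasDerivAt (fun t : ℝ => fderiv ℝ f (t • v)) (fderiv ℝ (fderiv ℝ f) v v) 1 :=
      HasFDerivAt.comp_hasDerivAt 1
        (by simpa using hD.hasFDerivAt :
          HasFDerivAt (fderiv ℝ f) (fderiv ℝ (fderiv ℝ f) v) ((1 : ℝ) • v)) hφ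
    have heq : (fun t : ℝ => fderiv ℝ f (t • v)) =ᶠ[nhds 1]
        fun t => t ^ (k - 1) • fderiv ℝ f v := by
      filter_upwards [eventually_gt_nhds zero_lt_one] with t ht
      ext Y
      simpa [smul_eq_mul] using hom' t ht Y
    have h2 : HasDerivAt (fun t : ℝ => t ^ (k - 1) • fderiv ℝ f v)
        ((k - 1) • fderiv ℝ f v) 1 := by
      simpa [Real.one_rpow] using
        (Real.hasDerivAt_rpow_const (p := k - 1) (Or.inl one_ne_zero)).smul_const (fderiv ℝ f v)
    have h3 := (h1.congr_of_eventuallyEq heq.symm).unique h2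
    intro Y
    rw [h3]
    simp [smul_eq_mul]
  -- symmetry of the second derivative
  have hsymm : ∀ a b, fderiv ℝ (fderiv ℝ f) v a b = fderiv ℝ (fderiv ℝ f) v b a := by
    intro a b
    refine second_derivative_symmetric_of_eventually (f := f) ?_ hD.hasFDerivAt a b
    filter_upwards [hs.mem_nhds hv] with y hy
    exact (hdiff y hy).hasFDerivAt
  -- conclusion
  rw [iteratedFDeriv_two_apply, iteratedFDeriv_two_apply]
  simp only [Matrix.cons_val_zero, Matrix.cons_val_one, Matrix.head_cons]
  have hLv : fderiv ℝ f v v = k * f v := euler v hv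
  set L := fderiv ℝ f v with hLdef
  set B := fderiv ℝ (fderiv ℝ f) v with hBdef
  set c : ℝ := L X / (k * f v) with hc
  have expand : B (X - c • v) (X - c • v)
      = B X X - c * B X v - c * B v X + c * c * B v v := by
    simp only [map_sub, map_smul, ContinuousLinearMap.sub_apply,
      ContinuousLinearMap.smul_apply, smul_eq_mul]
    ring
  have h1 : B v X = (k - 1) * L X := hBv X
  have h2 : B X v = (k - 1) * L X := by rw [hsymm X v]; exact hBv X
  have h3 : B v v = (k - 1) * (k * f v) := by rw [hBv v, hLv]
  rw [expand, h1, h2, h3, hc]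
  field_simp
  ring
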